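/- arXiv:1201.4837 — 3 statements merged into one kernel-verified Lean document; each statement's English description precedes it below -/
import Mathlib

section
/- A positive semidefinite matrix a ∈ M_n(ℂ) is a finite sum of projections in M_n(ℂ) if and only if the trace of a is a nonnegative integer and tr(a) ≥ rank(a). -/
open Matrix ComplexOrder

/-- A matrix `a ∈ Mₙ(ℂ)` is a finite sum of projections (self-adjoint idempotents). -/
def Matrix.IsFiniteSumOfProjections {n : ℕ} (a : Matrix (Fin n) (Fin n) ℂ) : Prop :=
  ∃ (k : ℕ) (p : Fin k → Matrix (Fin n) (Fin n) ℂ),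
    (∀ i, (p i)ᴴ = p i ∧ p i * p i = p i) ∧ a = ∑ i, p i

variable {n : ℕ}

def rk1 (v : Fin n → ℂ) : Matrix (Fin n) (Fin n) ℂ := vecMulVec v (star v)

lemma rk1_apply (v : Fin n → ℂ) (k l : Fin n) : rk1 v k l = v k * star (v l) := rfl

lemma rk1_conjTranspose (v : Fin n → ℂ) : (rk1 v)ᴴ = rk1 v := by
  ext k l
  simp [rk1_apply, conjTranspose_apply, mul_comm]

lemma rk1_posSemidef (v : Fin n → ℂ) : (rk1 v).PosSemidef := by
  have h : rk1 v = (replicateRow (Fin 1) (star v))ᴴ * replicateRow (Fin 1) (star v) := by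
    rw [conjTranspose_replicateRow, star_star, rk1, vecMulVec_eq (Fin 1)]
    rfl
  rw [h]
  exact posSemidef_conjTranspose_mul_self _

lemma rk1_rank_le (v : Fin n → ℂ) : (rk1 v).rank ≤ 1 := by
  rw [rk1, vecMulVec_eq (Fin 1)]
  calc (replicateCol (Fin 1) v * replicateRow (Fin 1) (star v)).rank ≤ (replicateCol (Fin 1) v).rank :=
        rank_mul_le_left _ _
    _ ≤ Fintype.card (Fin 1) := rank_le_card_width _
    _ = 1 := by simp

lemma rk1_trace (v : Fin n → ℂ) : (rk1 v).trace = ∑ k, v k * star (v k) := rfl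

lemma rk1_proj (v : Fin n → ℂ) (h : ∑ k, v k * star (v k) = 1) :
    rk1 v * rk1 v = rk1 v := by
  ext k l
  rw [mul_apply]
  simp only [rk1_apply]
  calc ∑ i, v k * star (v i) * (v i * star (v l))
      = (∑ i, v i * star (v i)) * (v k * star (v l)) := by
        rw [Finset.sum_mul]; exact Finset.sum_congr rfl fun i _ => by ring
    _ = v k * star (v l) := by rw [h, one_mul]

lemma matrix_rank_add_le (A B : Matrix (Fin n) (Fin n) ℂ) :
    (A + B).rank ≤ A.rank + B.rank := by
  simp only [Matrix.rank]
  rw [mulVecLin_add]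
  have hle : LinearMap.range (A.mulVecLin + B.mulVecLin) ≤
      LinearMap.range A.mulVecLin ⊔ LinearMap.range B.mulVecLin := by
    rintro x ⟨y, rfl⟩
    exact Submodule.add_mem_sup ⟨y, rfl⟩ ⟨y, rfl⟩
  calc Module.finrank ℂ (LinearMap.range (A.mulVecLin + B.mulVecLin))
      ≤ Module.finrank ℂ ↥(LinearMap.range A.mulVecLin ⊔ LinearMap.range B.mulVecLin) :=
        Submodule.finrank_mono hle
    _ ≤ _ := Submodule.finrank_add_le_finrank_add_finrank _ _

lemma posSemidef_add {A B : Matrix (Fin n) (Fin n) ℂ} (hA : A.PosSemidef) (hB : B.PosSemidef) :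
    (A + B).PosSemidef := by
  exact hA.add hB

lemma fsop_add_proj {a p : Matrix (Fin n) (Fin n) ℂ} (hp1 : pᴴ = p) (hp2 : p * p = p)
    (h : a.IsFiniteSumOfProjections) : (p + a).IsFiniteSumOfProjections := by
  obtain ⟨k, q, hq, rfl⟩ := h
  refine ⟨k + 1, Fin.cons p q, fun i => ?_, by rw [Fin.sum_cons]⟩
  refine Fin.cases ?_ ?_ i
  · exact ⟨hp1, hp2⟩
  · exact fun j => hq j

lemma fsop_unitary_conj {a : Matrix (Fin n) (Fin n) ℂ} (U : Matrix (Fin n) (Fin n) ℂ)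
    (hU : star U * U = 1) (h : a.IsFiniteSumOfProjections) :
    (U * a * star U).IsFiniteSumOfProjections := by
  obtain ⟨k, q, hq, rfl⟩ := h
  refine ⟨k, fun i => U * q i * star U, fun i => ⟨?_, ?_⟩, ?_⟩
  · simp only [Matrix.star_eq_conjTranspose, conjTranspose_mul, conjTranspose_conjTranspose,
      (hq i).1, mul_assoc]
  · calc U * q i * star U * (U * q i * star U)
        = U * (q i * (star U * U) * q i) * star U := by noncomm_ring
      _ = U * q i * star U := by rw [hU, mul_one, (hq i).2, mul_assoc]
  · rw [Finset.mul_sum, Finset.sum_mul]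

lemma sum_two_point {M : Type*} [AddCommMonoid M] {i j : Fin n} (hij : i ≠ j) (f : Fin n → M)
    (hf : ∀ k, k ≠ i → k ≠ j → f k = 0) : ∑ k, f k = f i + f j := by
  rw [← Finset.sum_pair hij]
  refine (Finset.sum_subset (Finset.subset_univ _) ?_).symm
  intro k _ hk
  simp only [Finset.mem_insert, Finset.mem_singleton, not_or] at hk
  exact hf k hk.1 hk.2

/-- Key 2x2 construction. -/
lemma diag_step (m : ℕ) (lam : Fin n → ℝ) (hnn : ∀ i, 0 ≤ lam i)
    (htr : ∑ i, lam i = (m + 1 : ℕ))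
    (hrk : (Finset.univ.filter (fun i => lam i ≠ 0)).card ≤ m + 1)
    (IH : ∀ {N : ℕ} (b : Matrix (Fin N) (Fin N) ℂ), b.PosSemidef → b.trace = (m : ℂ) →
      b.rank ≤ m → b.IsFiniteSumOfProjections) :
    (Matrix.diagonal (fun i => (lam i : ℂ))).IsFiniteSumOfProjections := by
  classical
  set s : Finset (Fin n) := Finset.univ.filter (fun i => lam i ≠ 0) with hs
  -- there is an eigenvalue ≥ 1
  obtain ⟨i, hi1⟩ : ∃ i, 1 ≤ lam i := by
    by_contra hcon
    push_neg at hcon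
    have hsne : s.Nonempty := by
      rcases Finset.exists_ne_zero_of_sum_ne_zero (by rw [htr]; positivity :
        ∑ i, lam i ≠ 0) with ⟨i, _, hi⟩
      exact ⟨i, by simp [hs, hi]⟩
    have h1 : ∑ k ∈ s, lam k = ∑ k, lam k := Finset.sum_filter_ne_zero _
    have h2 : ∑ k ∈ s, lam k < ∑ k ∈ s, (1 : ℝ) :=
      Finset.sum_lt_sum_of_nonempty hsne (fun k _ => hcon k)
    rw [Finset.sum_const, nsmul_eq_mul, mul_one] at h2
    have h3 : (s.card : ℝ) ≤ (m + 1 : ℕ) := by exact_mod_cast hrk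
    rw [h1, htr] at h2
    linarith
  have hi0 : lam i ≠ 0 := by positivity
  set lam' : Fin n → ℝ := Function.update lam i (lam i - 1) with hlam'
  by_cases hcase : (Finset.univ.filter (fun k => lam' k ≠ 0)).card ≤ m
  · -- subtract the coordinate projection at i
    have hsplit : Matrix.diagonal (fun k => (lam k : ℂ)) =
        Matrix.diagonal (Pi.single i (1 : ℂ)) + Matrix.diagonal (fun k => (lam' k : ℂ)) := by
      ext k l
      by_cases hkl : k = l
      · subst hkl
        by_cases hk : k = i
        · subst hk
          simp only [Matrix.add_apply, diagonal_apply_eq, Pi.single_eq_same, hlam',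
            Function.update_self]
          push_cast
          ring
        · simp only [Matrix.add_apply, diagonal_apply_eq, Pi.single_eq_of_ne hk, hlam',
            Function.update_of_ne hk, zero_add]
      · simp [diagonal_apply_ne _ hkl]
    rw [hsplit]
    have hstar : star (Pi.single i (1 : ℂ)) = (Pi.single i 1 : Fin n → ℂ) := by
      funext k
      by_cases hk : k = i
      · subst hk; simp
      · simp [Pi.single_eq_of_ne hk]
    refine fsop_add_proj ?_ ?_ (IH _ ?_ ?_ ?_)
    · rw [diagonal_conjTranspose, hstar]
    · rw [diagonal_mul_diagonal]
      ext k l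
      by_cases hkl : k = l
      · subst hkl
        by_cases hk : k = i
        · subst hk; simp
        · simp [Pi.single_eq_of_ne hk]
      · simp [diagonal_apply_ne _ hkl]
    · refine posSemidef_diagonal_iff.mpr fun k => ?_
      have h0 : (0:ℝ) ≤ lam' k := by
        by_cases hk : k = i
        · subst hk; simp only [hlam', Function.update_self]; linarith
        · simp only [hlam', Function.update_of_ne hk]; exact hnn k
      exact_mod_cast h0
    · rw [trace_diagonal]
      have hsum' : ∑ k, lam' k = m := by
        rw [hlam', Finset.sum_update_of_mem (Finset.mem_univ i), ← Finset.erase_eq]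
        have h4 := Finset.add_sum_erase Finset.univ lam (Finset.mem_univ i)
        push_cast at htr ⊢
        linarith
      rw [← Complex.ofReal_sum]
      exact_mod_cast congrArg Complex.ofReal hsum'
    · rw [Matrix.rank_diagonal, Fintype.card_subtype]
      calc (Finset.univ.filter (fun k => (lam' k : ℂ) ≠ 0)).card
          = (Finset.univ.filter (fun k => lam' k ≠ 0)).card := by
            congr 1; apply Finset.filter_congr; intro k _; simp
        _ ≤ m := hcase
  · -- the 2x2 rotation trick
    push_neg at hcase
    have hsub : Finset.univ.filter (fun k => lam' k ≠ 0) ⊆ s := by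
      intro k hk
      simp only [Finset.mem_filter, Finset.mem_univ, true_and] at hk
      refine Finset.mem_filter.mpr ⟨Finset.mem_univ _, ?_⟩
      by_cases hki : k = i
      · subst hki; exact hi0
      · rwa [hlam', Function.update_of_ne hki] at hk
    have hc1 : (Finset.univ.filter (fun k => lam' k ≠ 0)).card ≤ s.card :=
      Finset.card_le_card hsub
    have hcards : s.card = m + 1 := le_antisymm hrk (by omega)
    have hseq : Finset.univ.filter (fun k => lam' k ≠ 0) = s :=
      Finset.eq_of_subset_of_card_le hsub (by omega)
    have hii : i ∈ s := Finset.mem_filter.mpr ⟨Finset.mem_univ _, hi0⟩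
    have hgt1 : 1 < lam i := by
      have hmem : i ∈ Finset.univ.filter (fun k => lam' k ≠ 0) := hseq ▸ hii
      simp only [Finset.mem_filter, Finset.mem_univ, true_and, hlam',
        Function.update_self] at hmem
      cases lt_or_eq_of_le hi1 with
      | inl h => exact h
      | inr h => exact absurd (by linarith : lam i - 1 = 0) hmem
    -- find j with 0 < lam j < 1
    obtain ⟨j, hji, hj0, hj1⟩ : ∃ j, j ≠ i ∧ lam j ≠ 0 ∧ lam j < 1 := by
      by_contra hcon
      push_neg at hcon
      have herase : ∀ k ∈ s.erase i, (1:ℝ) ≤ lam k := by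
        intro k hk
        rcases Finset.mem_erase.mp hk with ⟨hki, hks⟩
        simp only [hs, Finset.mem_filter] at hks
        exact hcon k hki hks.2
      have hbound := Finset.card_nsmul_le_sum (s.erase i) lam 1 herase
      simp only [nsmul_eq_mul, mul_one] at hbound
      have hce : (s.erase i).card = m := by
        rw [Finset.card_erase_of_mem hii, hcards]
        omega
      have hsum : ∑ k ∈ s.erase i, lam k + lam i = ∑ k ∈ s, lam k :=
        Finset.sum_erase_add _ _ hii
      have h1 : ∑ k ∈ s, lam k = ∑ k, lam k := Finset.sum_filter_ne_zero _
      rw [hce] at hbound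
      rw [h1, htr] at hsum
      push_cast at hsum hbound
      linarith
    -- the 2x2 rotation construction
    have hij : i ≠ j := hji.symm
    have hb0 : 0 < lam j := lt_of_le_of_ne (hnn j) (Ne.symm hj0)
    have hd : 0 < lam i - lam j := by linarith
    have h1b : (0:ℝ) ≤ 1 - lam j := by linarith
    have ha1 : (0:ℝ) ≤ lam i - 1 := by linarith
    have ha0 : (0:ℝ) ≤ lam i := hnn i
    set x := Real.sqrt (lam i * (1 - lam j) / (lam i - lam j)) with hxdef
    set y := Real.sqrt (lam j * (lam i - 1) / (lam i - lam j)) with hydef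
    set c := Real.sqrt (lam i * (lam i - 1) / (lam i - lam j)) with hcdef
    set t := Real.sqrt (lam j * (1 - lam j) / (lam i - lam j)) with htdef
    have hx2 : x * x = lam i * (1 - lam j) / (lam i - lam j) :=
      Real.mul_self_sqrt (div_nonneg (mul_nonneg ha0 h1b) hd.le)
    have hy2 : y * y = lam j * (lam i - 1) / (lam i - lam j) :=
      Real.mul_self_sqrt (div_nonneg (mul_nonneg hb0.le ha1) hd.le)
    have hc2 : c * c = lam i * (lam i - 1) / (lam i - lam j) :=
      Real.mul_self_sqrt (div_nonneg (mul_nonneg ha0 ha1) hd.le)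
    have ht2 : t * t = lam j * (1 - lam j) / (lam i - lam j) :=
      Real.mul_self_sqrt (div_nonneg (mul_nonneg hb0.le h1b) hd.le)
    have hxc : x * x + c * c = lam i := by rw [hx2, hc2]; field_simp; ring
    have hys : y * y + t * t = lam j := by rw [hy2, ht2]; field_simp; ring
    have huu : x * x + y * y = 1 := by rw [hx2, hy2]; field_simp; ring
    have hvv : c * c + t * t = lam i + lam j - 1 := by rw [hc2, ht2]; field_simp; ring
    have hxy : x * y = c * t := by
      rw [hxdef, hydef, hcdef, htdef,
        ← Real.sqrt_mul (div_nonneg (mul_nonneg ha0 h1b) hd.le),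
        ← Real.sqrt_mul (div_nonneg (mul_nonneg ha0 ha1) hd.le)]
      congr 1
      field_simp
    set U : Fin n → ℂ := fun k => if k = i then (x : ℂ) else if k = j then (y : ℂ) else 0
      with hUdef
    set V : Fin n → ℂ := fun k => if k = i then (c : ℂ) else if k = j then (-(t : ℂ)) else 0
      with hVdef
    set lam'' : Fin n → ℝ := fun k => if k = i then 0 else if k = j then 0 else lam k
      with hlam''def
    have hsr : ∀ r : ℝ, star ((r : ℝ) : ℂ) = ((r : ℝ) : ℂ) := fun r => by
      rw [RCLike.star_def, Complex.conj_ofReal]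
    -- the key decomposition
    have key : Matrix.diagonal (fun k => (lam k : ℂ)) =
        rk1 U + (rk1 V + Matrix.diagonal (fun k => (lam'' k : ℂ))) := by
      ext k l
      simp only [Matrix.add_apply, rk1_apply, Matrix.diagonal_apply, hUdef, hVdef, hlam''def]
      by_cases hki : k = i
      · simp only [hki]
        by_cases hli : l = i
        · simp only [hli, eq_self_iff_true, if_true, Complex.star_def, Complex.conj_ofReal, map_neg]
          have hr : lam i = x * x + (c * c + 0) := by linarith
          exact_mod_cast hr
        · by_cases hlj : l = j
          · simp only [hlj, eq_self_iff_true, if_true, if_neg hij, if_neg hij.symm, star_neg, Complex.star_def, Complex.conj_ofReal, map_neg]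
            have hr : (0:ℝ) = x * y + (c * -t + 0) := by linear_combination -hxy
            exact_mod_cast hr
          · have hil : ¬ (i = l) := fun h => hli h.symm
            simp [if_neg hil, if_neg hli, if_neg hlj]
      · by_cases hkj : k = j
        · simp only [hkj, eq_self_iff_true, if_true, if_neg hij, if_neg hij.symm]
          by_cases hli : l = i
          · simp only [hli, eq_self_iff_true, if_true, if_neg hij.symm, if_neg hij, Complex.star_def, Complex.conj_ofReal, map_neg]
            have hr : (0:ℝ) = y * x + (-t * c + 0) := by linear_combination -hxy
            exact_mod_cast hr
          · by_cases hlj : l = j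
            · simp only [hlj, eq_self_iff_true, if_true, if_neg hji, star_neg,
                Complex.star_def, Complex.conj_ofReal, map_neg]
              have hr : lam j = y * y + (-t * -t + 0) := by linear_combination hys.symm
              exact_mod_cast hr
            · have hjl : ¬ (j = l) := fun h => hlj h.symm
              simp [if_neg hjl, if_neg hli, if_neg hlj]
        · by_cases hkl : k = l
          · simp only [hkl, eq_self_iff_true, if_true]
            rw [← hkl]
            simp [if_neg hki, if_neg hkj]
          · simp [if_neg hki, if_neg hkj, if_neg hkl]
    -- the projection and the remainder
    have hUproj : rk1 U * rk1 U = rk1 U := by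
      refine rk1_proj U ?_
      have hzero : ∀ k, k ≠ i → k ≠ j → U k * star (U k) = 0 := by
        intro k h1 h2
        simp [hUdef, if_neg h1, if_neg h2]
      rw [sum_two_point hij _ hzero]
      simp only [hUdef, eq_self_iff_true, if_true, if_neg hij, if_neg hji, Complex.star_def, Complex.conj_ofReal, map_neg]
      have hr : x * x + y * y = 1 := huu
      exact_mod_cast hr
    have hVtr : (rk1 V).trace = ((lam i + lam j - 1 : ℝ) : ℂ) := by
      rw [rk1_trace]
      have hzero : ∀ k, k ≠ i → k ≠ j → V k * star (V k) = 0 := by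
        intro k h1 h2
        simp [hVdef, if_neg h1, if_neg h2]
      rw [sum_two_point hij _ hzero]
      simp only [hVdef, eq_self_iff_true, if_true, if_neg hij, if_neg hji, star_neg, Complex.star_def, Complex.conj_ofReal, map_neg]
      have hr : c * c + -t * -t = lam i + lam j - 1 := by linear_combination hvv
      exact_mod_cast hr
    have hsum'' : ∑ k, lam'' k = (m : ℝ) + 1 - lam i - lam j := by
      have hdiff : ∑ k, (lam k - lam'' k) = lam i + lam j := by
        rw [sum_two_point hij _ (fun k h1 h2 => by
          simp [hlam''def, if_neg h1, if_neg h2])]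
        simp [hlam''def, eq_self_iff_true, if_true, if_neg hij, if_neg hji]
      rw [Finset.sum_sub_distrib] at hdiff
      push_cast at htr
      linarith
    set b : Matrix (Fin n) (Fin n) ℂ := rk1 V + Matrix.diagonal (fun k => (lam'' k : ℂ)) with hbdef
    have hbPSD : b.PosSemidef := by
      refine posSemidef_add (rk1_posSemidef V) (posSemidef_diagonal_iff.mpr fun k => ?_)
      have h0 : (0:ℝ) ≤ lam'' k := by
        simp only [hlam''def]
        split_ifs <;> first | rfl | exact hnn k
      exact_mod_cast h0
    have hbtr : b.trace = (m : ℂ) := by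
      rw [hbdef, Matrix.trace_add, hVtr, trace_diagonal, ← Complex.ofReal_sum,
        ← Complex.ofReal_add]
      rw [hsum'']
      push_cast
      ring
    have hjs : j ∈ s := Finset.mem_filter.mpr ⟨Finset.mem_univ _, hj0⟩
    have hjer : j ∈ s.erase i := Finset.mem_erase.mpr ⟨hji, hjs⟩
    have hm1 : 1 ≤ m := by
      have := Finset.card_erase_of_mem hii
      have hpos := Finset.card_pos.mpr ⟨j, hjer⟩
      omega
    have hbrk : b.rank ≤ m := by
      have hfilt : Finset.univ.filter (fun k => (lam'' k : ℂ) ≠ 0) = (s.erase i).erase j := by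
        ext k
        simp only [Finset.mem_filter, Finset.mem_univ, true_and, Finset.mem_erase, hs,
          hlam''def, ne_eq, Complex.ofReal_eq_zero]
        constructor
        · intro hk
          by_cases h1 : k = i
          · simp [h1] at hk
          · by_cases h2 : k = j
            · simp [if_neg h1, h2] at hk
            · rw [if_neg h1, if_neg h2] at hk
              exact ⟨h2, h1, hk⟩
        · rintro ⟨h2, h1, hk⟩
          rw [if_neg h1, if_neg h2]
          exact hk
      have hcard'' : ((s.erase i).erase j).card = m - 1 := by
        rw [Finset.card_erase_of_mem hjer, Finset.card_erase_of_mem hii, hcards]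
        omega
      calc b.rank ≤ (rk1 V).rank + (Matrix.diagonal (fun k => (lam'' k : ℂ))).rank :=
            matrix_rank_add_le _ _
        _ ≤ 1 + (m - 1) := by
            refine add_le_add (rk1_rank_le V) ?_
            rw [Matrix.rank_diagonal, Fintype.card_subtype, hfilt, hcard'']
        _ ≤ m := by omega
    rw [key]
    exact fsop_add_proj (rk1_conjTranspose U) hUproj (IH b hbPSD hbtr hbrk)


lemma fsop_zero : (0 : Matrix (Fin n) (Fin n) ℂ).IsFiniteSumOfProjections :=
  ⟨0, ![], fun i => i.elim0, by simp⟩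

lemma matrix_rank_sum_le {k : ℕ} (p : Fin k → Matrix (Fin n) (Fin n) ℂ) (s : Finset (Fin k)) :
    (∑ i ∈ s, p i).rank ≤ ∑ i ∈ s, (p i).rank := by
  induction s using Finset.induction with
  | empty => simp [Matrix.rank_zero]
  | insert _ _ hx ih =>
    rw [Finset.sum_insert hx, Finset.sum_insert hx]
    exact le_trans (matrix_rank_add_le _ _) (Nat.add_le_add_left ih _)

lemma proj_trace_eq_rank {p : Matrix (Fin n) (Fin n) ℂ} (h1 : pᴴ = p) (h2 : p * p = p) :
    p.trace = (p.rank : ℂ) := by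
  have hH : p.IsHermitian := h1
  set U : Matrix (Fin n) (Fin n) ℂ := (hH.eigenvectorUnitary : Matrix (Fin n) (Fin n) ℂ) with hU
  set D : Matrix (Fin n) (Fin n) ℂ := diagonal (RCLike.ofReal ∘ hH.eigenvalues) with hD
  have hdiag : star U * p * U = D := by
    have := hH.conjStarAlgAut_star_eigenvectorUnitary
    rwa [Unitary.conjStarAlgAut_apply, Unitary.coe_star, star_star] at this
  have hUU : U * star U = 1 := (Matrix.mem_unitaryGroup_iff).mp hH.eigenvectorUnitary.2
  have hUU' : star U * U = 1 := (Matrix.mem_unitaryGroup_iff').mp hH.eigenvectorUnitary.2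
  have hDD : D * D = D := by
    rw [← hdiag]
    calc star U * p * U * (star U * p * U) = star U * (p * (U * star U) * p) * U := by
          noncomm_ring
      _ = star U * p * U := by rw [hUU, mul_one, h2, mul_assoc]
  have heig : ∀ i, hH.eigenvalues i = 0 ∨ hH.eigenvalues i = 1 := by
    intro i
    have h0 := congrFun (congrFun (hD ▸ hDD) i) i
    simp only [diagonal_mul_diagonal, diagonal_apply_eq, Function.comp_apply] at h0
    have h' : hH.eigenvalues i * hH.eigenvalues i = hH.eigenvalues i := by
      exact_mod_cast h0
    rcases mul_eq_zero.mp (by linear_combination h' :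
        hH.eigenvalues i * (hH.eigenvalues i - 1) = 0) with h | h
    · exact Or.inl h
    · exact Or.inr (by linarith)
  have htr : p.trace = ∑ i, (hH.eigenvalues i : ℂ) := by
    conv_lhs => rw [hH.spectral_theorem]
    rw [Unitary.conjStarAlgAut_apply, Matrix.trace_mul_cycle, ← hU, hUU', one_mul, trace_diagonal]
    rfl
  have hrank : p.rank = Fintype.card {i // hH.eigenvalues i ≠ 0} := hH.rank_eq_card_non_zero_eigs
  have hval : ∀ i, ((hH.eigenvalues i : ℂ)) = if hH.eigenvalues i ≠ 0 then 1 else 0 := by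
    intro i; rcases heig i with h | h <;> simp [h]
  rw [htr, hrank, Fintype.card_subtype]
  rw [Finset.sum_congr rfl (fun i _ => hval i), Finset.sum_boole]

/-- the reverse direction, by induction on the trace -/
lemma fsop_reverse (m : ℕ) : ∀ {N : ℕ} (a : Matrix (Fin N) (Fin N) ℂ), a.PosSemidef →
    a.trace = (m : ℂ) → a.rank ≤ m → a.IsFiniteSumOfProjections := by
  induction m with
  | zero =>
    intro N a ha htr _
    have hH : a.IsHermitian := ha.1
    set U : Matrix (Fin N) (Fin N) ℂ := (hH.eigenvectorUnitary : Matrix (Fin N) (Fin N) ℂ)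
      with hU
    have hUU' : star U * U = 1 := (Matrix.mem_unitaryGroup_iff').mp hH.eigenvectorUnitary.2
    have htr' : a.trace = ((∑ i, hH.eigenvalues i : ℝ) : ℂ) := by
      conv_lhs => rw [hH.spectral_theorem]
      rw [Unitary.conjStarAlgAut_apply, Matrix.trace_mul_cycle, ← hU, hUU', one_mul, trace_diagonal]
      push_cast
      rfl
    have hsum : ∑ i, hH.eigenvalues i = 0 := by
      have := htr'.symm.trans htr
      exact_mod_cast this
    have hzero : ∀ i ∈ Finset.univ, hH.eigenvalues i = 0 :=
      (Finset.sum_eq_zero_iff_of_nonneg (fun i _ => ha.eigenvalues_nonneg i)).mp hsum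
    have ha0 : a = 0 := by
      rw [hH.spectral_theorem]
      have : diagonal (RCLike.ofReal ∘ hH.eigenvalues) = (0 : Matrix (Fin N) (Fin N) ℂ) := by
        ext k l
        by_cases hkl : k = l
        · subst hkl
          simp [hzero k (Finset.mem_univ k)]
        · simp [diagonal_apply_ne _ hkl]
      rw [this, map_zero]
    rw [ha0]
    exact fsop_zero
  | succ m ih =>
    intro N a ha htr hrk
    have hH : a.IsHermitian := ha.1
    set U : Matrix (Fin N) (Fin N) ℂ := (hH.eigenvectorUnitary : Matrix (Fin N) (Fin N) ℂ)
      with hU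
    have hUU' : star U * U = 1 := (Matrix.mem_unitaryGroup_iff').mp hH.eigenvectorUnitary.2
    have htr' : a.trace = ((∑ i, hH.eigenvalues i : ℝ) : ℂ) := by
      conv_lhs => rw [hH.spectral_theorem]
      rw [Unitary.conjStarAlgAut_apply, Matrix.trace_mul_cycle, ← hU, hUU', one_mul, trace_diagonal]
      push_cast
      rfl
    have hsum : ∑ i, hH.eigenvalues i = ((m + 1 : ℕ) : ℝ) := by
      have h0 := htr'.symm.trans htr
      exact_mod_cast h0
    have hrk' : (Finset.univ.filter (fun i => hH.eigenvalues i ≠ 0)).card ≤ m + 1 := by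
      have h1 : a.rank = Fintype.card {i // hH.eigenvalues i ≠ 0} :=
        hH.rank_eq_card_non_zero_eigs
      rw [h1, Fintype.card_subtype] at hrk
      exact hrk
    have hdiagfsop : (Matrix.diagonal (fun i => (hH.eigenvalues i : ℂ))).IsFiniteSumOfProjections :=
      diag_step m hH.eigenvalues ha.eigenvalues_nonneg hsum hrk' (fun {N'} b => ih b)
    rw [hH.spectral_theorem]
    have hfun : diagonal (RCLike.ofReal ∘ hH.eigenvalues) =
        Matrix.diagonal (fun i => (hH.eigenvalues i : ℂ)) := rfl
    rw [hfun, Unitary.conjStarAlgAut_apply]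
    exact fsop_unitary_conj U hUU' hdiagfsop


theorem posSemidef_finite_sum_of_projections_iff
    {n : ℕ} (a : Matrix (Fin n) (Fin n) ℂ) (ha : a.PosSemidef) :
    a.IsFiniteSumOfProjections ↔ ∃ m : ℕ, a.trace = (m : ℂ) ∧ a.rank ≤ m := by
  constructor
  · rintro ⟨k, p, hp, rfl⟩
    refine ⟨∑ i, (p i).rank, ?_, ?_⟩
    · rw [Matrix.trace_sum]
      push_cast
      exact Finset.sum_congr rfl fun i _ => proj_trace_eq_rank (hp i).1 (hp i).2
    · exact matrix_rank_sum_le p Finset.univ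
  · rintro ⟨m, htr, hrk⟩
    exact fsop_reverse m a ha htr hrk
end

section
/- For every real number γ ∈ [3/2, 3], the diagonal matrix diag(2γ−3, 3−γ, 3−γ) ∈ M_3(ℂ) is the sum of three projections in M_3(ℂ). -/
open Matrix

/-- Rank-one projection from a real unit vector in dimension 3. -/
lemma proj_of_unit (v : Fin 3 → ℝ) (hv : v 0 ^ 2 + v 1 ^ 2 + v 2 ^ 2 = 1) :
    ((Matrix.of fun i j => ((v i * v j : ℝ) : ℂ))ᴴ
        = Matrix.of fun i j => ((v i * v j : ℝ) : ℂ)) ∧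
    (Matrix.of fun i j => ((v i * v j : ℝ) : ℂ)) *
        (Matrix.of fun i j => ((v i * v j : ℝ) : ℂ))
      = Matrix.of fun i j => ((v i * v j : ℝ) : ℂ) := by
  constructor
  · ext i j
    simp [Matrix.conjTranspose_apply, mul_comm]
  · ext i j
    have h : ((v 0 : ℂ) ^ 2 + (v 1 : ℂ) ^ 2 + (v 2 : ℂ) ^ 2) = 1 := by exact_mod_cast hv
    simp only [Matrix.mul_apply, Fin.sum_univ_three, Matrix.of_apply]
    push_cast
    linear_combination ((v i : ℂ) * (v j : ℂ)) * h

theorem diagonal_sum_of_three_projections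
    (γ : ℝ) (hγ : γ ∈ Set.Icc (3/2 : ℝ) 3) :
    ∃ p₁ p₂ p₃ : Matrix (Fin 3) (Fin 3) ℂ,
      (p₁ᴴ = p₁ ∧ p₁ * p₁ = p₁) ∧ (p₂ᴴ = p₂ ∧ p₂ * p₂ = p₂) ∧
      (p₃ᴴ = p₃ ∧ p₃ * p₃ = p₃) ∧
      Matrix.diagonal ![(2 * γ - 3 : ℂ), (3 - γ : ℂ), (3 - γ : ℂ)] = p₁ + p₂ + p₃ := by
  obtain ⟨h1, h2⟩ := hγ
  set s : ℝ := Real.sqrt ((2 * γ - 3) / 3) with hs_def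
  set t : ℝ := Real.sqrt ((6 - 2 * γ) / 3) with ht_def
  set r : ℝ := Real.sqrt 3 with hr_def
  have hs2 : s ^ 2 = (2 * γ - 3) / 3 := Real.sq_sqrt (by linarith)
  have ht2 : t ^ 2 = (6 - 2 * γ) / 3 := Real.sq_sqrt (by linarith)
  have hr2 : r ^ 2 = 3 := Real.sq_sqrt (by norm_num)
  clear_value s t r
  set v₁ : Fin 3 → ℝ := ![s, t, 0] with hv₁
  set v₂ : Fin 3 → ℝ := ![s, -t / 2, t * r / 2] with hv₂
  set v₃ : Fin 3 → ℝ := ![s, -t / 2, -(t * r) / 2] with hv₃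
  have u₁ : v₁ 0 ^ 2 + v₁ 1 ^ 2 + v₁ 2 ^ 2 = 1 := by
    simp [hv₁]; linarith [hs2, ht2]
  have u₂ : v₂ 0 ^ 2 + v₂ 1 ^ 2 + v₂ 2 ^ 2 = 1 := by
    simp [hv₂]; nlinarith [hs2, ht2, hr2]
  have u₃ : v₃ 0 ^ 2 + v₃ 1 ^ 2 + v₃ 2 ^ 2 = 1 := by
    simp [hv₃]; nlinarith [hs2, ht2, hr2]
  obtain ⟨a₁, b₁⟩ := proj_of_unit v₁ u₁
  obtain ⟨a₂, b₂⟩ := proj_of_unit v₂ u₂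
  obtain ⟨a₃, b₃⟩ := proj_of_unit v₃ u₃
  refine ⟨_, _, _, ⟨a₁, b₁⟩, ⟨a₂, b₂⟩, ⟨a₃, b₃⟩, ?_⟩
  have hs2' : (s : ℂ) ^ 2 = ((2 * γ - 3) / 3 : ℝ) := by exact_mod_cast hs2
  have ht2' : (t : ℂ) ^ 2 = ((6 - 2 * γ) / 3 : ℝ) := by exact_mod_cast ht2
  have hr2' : (r : ℂ) ^ 2 = 3 := by exact_mod_cast hr2
  push_cast at hs2' ht2'
  ext i j
  fin_cases i <;> fin_cases j <;>
    simp only [Matrix.diagonal, Matrix.add_apply, Matrix.of_apply, hv₁, hv₂, hv₃] <;>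
    simp
  all_goals
    first
      | ring1
      | linear_combination (-3 : ℂ) * hs2'
      | linear_combination (-3 / 2 : ℂ) * ht2'
      | linear_combination (-(t : ℂ) ^ 2 / 2) * hr2' - (3 / 2 : ℂ) * ht2'
end

section
/- Let k, h, m, r be integers with m ≥ 1, k > m, h ≥ 0, r ≥ 1 and rk ≥ rm + m. Then the diagonal matrix in M_{rm+m}(ℂ) whose first rm diagonal entries are all equal to k/m and whose remaining m diagonal entries are all equal to h/m is a finite sum of projections in M_{rm+m}(ℂ). -/
open Matrix Complex Finset

theorem rational_diagonal_finite_sum_of_projections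
    (k h m r : ℕ) (hm : 1 ≤ m) (hk : m < k) (hr : 1 ≤ r)
    (hrk : r * m + m ≤ r * k) :
    ∃ (N : ℕ) (p : Fin N → Matrix (Fin (r * m + m)) (Fin (r * m + m)) ℂ),
      (∀ i, (p i)ᴴ = p i ∧ p i * p i = p i) ∧
      Matrix.diagonal (fun i : Fin (r * m + m) =>
        if (i : ℕ) < r * m then ((k : ℂ) / (m : ℂ)) else ((h : ℂ) / (m : ℂ)))
        = ∑ i, p i := by
  classical
  have hrm1 : 1 ≤ r * m := by
    have := Nat.mul_le_mul hr hm
    simpa using this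
  set T : ℕ := r * k + h with hTdef
  have hT0 : T ≠ 0 := by omega
  have hTR : (T : ℝ) ≠ 0 := Nat.cast_ne_zero.mpr hT0
  have hTC : (T : ℂ) ≠ 0 := Nat.cast_ne_zero.mpr hT0
  have hmR : (m : ℝ) ≠ 0 := Nat.cast_ne_zero.mpr (by omega)
  have hmC : (m : ℂ) ≠ 0 := Nat.cast_ne_zero.mpr (by omega)
  have hnT : r * m + m ≤ T := by omega
  set d : ℕ → ℝ := fun a => if a < r * m then (k : ℝ) / m else (h : ℝ) / m with hddef
  have hd0 : ∀ a, 0 ≤ d a := by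
    intro a; dsimp [d]; split <;> positivity
  have hdsum : ∑ a ∈ Finset.range (r * m + m), d a = T := by
    rw [Finset.range_eq_Ico,
      ← Finset.sum_Ico_consecutive _ (Nat.zero_le (r * m)) (by omega : r * m ≤ r * m + m)]
    have h1 : ∀ a ∈ Finset.Ico 0 (r * m), d a = (k : ℝ) / m := by
      intro a ha; simp only [Finset.mem_Ico] at ha; simp [d, ha.2]
    have h2 : ∀ a ∈ Finset.Ico (r * m) (r * m + m), d a = (h : ℝ) / m := by
      intro a ha; simp only [Finset.mem_Ico] at ha
      have : ¬ a < r * m := by omega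
      simp [d, this]
    rw [Finset.sum_congr rfl h1, Finset.sum_congr rfl h2, Finset.sum_const, Finset.sum_const,
      Nat.card_Ico, Nat.card_Ico]
    have hmm : r * m + m - r * m = m := by omega
    rw [hmm, Nat.sub_zero, nsmul_eq_mul, nsmul_eq_mul, hTdef]
    push_cast
    field_simp
  set μ : ℂ := Complex.exp (2 * ↑Real.pi * I / T) with hμdef
  have hμprim : IsPrimitiveRoot μ T := Complex.isPrimitiveRoot_exp T hT0
  have hμ0 : μ ≠ 0 := Complex.exp_ne_zero _
  have hμstar : star μ = μ⁻¹ := by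
    rw [hμdef, ← Complex.exp_neg, Complex.star_def, ← Complex.exp_conj]
    congr 1
    simp only [map_div₀, _root_.map_mul, Complex.conj_I, Complex.conj_ofReal, map_ofNat, map_natCast]
    ring
  set v : Fin T → Fin (r * m + m) → ℂ :=
    fun j a => (Real.sqrt (d a / T) : ℂ) * μ ^ ((j : ℕ) * (a : ℕ)) with hvdef
  have key : ∀ (j : Fin T) (a b : Fin (r * m + m)),
      v j a * star (v j b)
        = ((Real.sqrt (d a / T) * Real.sqrt (d b / T) : ℝ) : ℂ)
            * (μ ^ ((a : ℤ) - (b : ℤ))) ^ (j : ℕ) := by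
    intro j a b
    have hz : (μ ^ ((a : ℤ) - (b : ℤ))) ^ (j : ℕ)
        = μ ^ ((((j : ℕ) : ℤ) * ((a : ℕ) : ℤ)) + -(((j : ℕ) : ℤ) * ((b : ℕ) : ℤ))) := by
      rw [← zpow_natCast (μ ^ ((a : ℤ) - (b : ℤ))) (j : ℕ), ← _root_.zpow_mul]
      congr 1
      push_cast
      ring
    have hstar : star (v j b)
        = (Real.sqrt (d b / T) : ℂ) * μ ^ (-(((j : ℕ) : ℤ) * ((b : ℕ) : ℤ))) := by
      simp only [hvdef]
      simp only [star_mul', star_pow, hμstar, Complex.star_def, Complex.conj_ofReal]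
      rw [← zpow_natCast μ⁻¹ ((j : ℕ) * (b : ℕ)), _root_.inv_zpow, ← _root_.zpow_neg,
        Nat.cast_mul]
    rw [hz, hstar]
    simp only [hvdef]
    rw [zpow_add₀ hμ0, ← zpow_natCast μ ((j : ℕ) * (a : ℕ)), Nat.cast_mul,
      Complex.ofReal_mul]
    ring
  have hnorm : ∀ j : Fin T, ∑ c, v j c * star (v j c) = 1 := by
    intro j
    have hc : ∀ c : Fin (r * m + m), v j c * star (v j c) = ((d c / T : ℝ) : ℂ) := by
      intro c
      rw [key, sub_self, zpow_zero, one_pow, mul_one,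
        Real.mul_self_sqrt (div_nonneg (hd0 _) (Nat.cast_nonneg _))]
    rw [Finset.sum_congr rfl (fun c _ => hc c), ← Complex.ofReal_sum]
    have : ∑ c : Fin (r * m + m), d c / T = 1 := by
      rw [← Finset.sum_div, Fin.sum_univ_eq_sum_range d (r * m + m), hdsum, div_self hTR]
    rw [this, Complex.ofReal_one]
  refine ⟨T, fun j => Matrix.of (fun a b => v j a * star (v j b)), fun j => ⟨?_, ?_⟩, ?_⟩
  · ext a b
    simp only [Matrix.conjTranspose_apply, Matrix.of_apply, star_mul', star_star]
    ring
  · ext a b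
    rw [Matrix.mul_apply]
    simp only [Matrix.of_apply]
    calc ∑ c, (v j a * star (v j c)) * (v j c * star (v j b))
        = (∑ c, v j c * star (v j c)) * (v j a * star (v j b)) := by
          rw [Finset.sum_mul]
          exact Finset.sum_congr rfl fun c _ => by ring
      _ = v j a * star (v j b) := by rw [hnorm j, one_mul]
  · ext a b
    rw [Matrix.sum_apply]
    simp only [Matrix.of_apply]
    rw [Finset.sum_congr rfl (fun j _ => key j a b), ← Finset.mul_sum]
    have hsum : ∑ j : Fin T, (μ ^ ((a : ℤ) - (b : ℤ))) ^ (j : ℕ)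
        = ∑ j ∈ Finset.range T, (μ ^ ((a : ℤ) - (b : ℤ))) ^ j :=
      Fin.sum_univ_eq_sum_range _ T
    by_cases hab : a = b
    · subst hab
      rw [Matrix.diagonal_apply_eq, hsum, sub_self, zpow_zero]
      simp only [one_pow, Finset.sum_const, Finset.card_range, nsmul_eq_mul, mul_one]
      rw [Real.mul_self_sqrt (div_nonneg (hd0 _) (Nat.cast_nonneg _))]
      dsimp [d]
      split <;> push_cast <;> field_simp <;> ring
    · rw [Matrix.diagonal_apply_ne _ hab]
      have hne : μ ^ ((a : ℤ) - (b : ℤ)) ≠ 1 := by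
        intro hone
        have hdvd : ((T : ℤ)) ∣ ((a : ℤ) - (b : ℤ)) :=
          (hμprim.zpow_eq_one_iff_dvd _).mp hone
        have h0 : ((a : ℤ) - (b : ℤ)) = 0 := by
          refine Int.eq_zero_of_dvd_of_natAbs_lt_natAbs hdvd ?_
          have ha := a.isLt
          have hb := b.isLt
          simp only [Int.natAbs_natCast]
          omega
        apply hab
        have : (a : ℤ) = (b : ℤ) := by omega
        exact Fin.ext (by exact_mod_cast this)
      have hT1 : (μ ^ ((a : ℤ) - (b : ℤ))) ^ T = 1 := by
        rw [← zpow_natCast (μ ^ ((a : ℤ) - (b : ℤ))) T, ← _root_.zpow_mul, mul_comm,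
          _root_.zpow_mul, zpow_natCast, hμprim.pow_eq_one, _root_.one_zpow]
      rw [hsum, geom_sum_eq hne, hT1, sub_self, zero_div, mul_zero]
end
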